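/- Suppose the estimation error bound (1/(m₁m₂))‖X̂ - X*‖_F² ≤ ε holds. Then under the 1-bit matrix completion model with logistic link, the excess misclassification risk of η̂ = sign(X̂) satisfies R(η̂) - R(η*) ≤ (1/2)√ε; and if additionally the low-noise condition |f(X*_{ij}) - 1/2| ≥ 1/(2c) holds for all entries, then R(η̂) - R(η*) ≤ (c/4)ε. -/

import Mathlib

noncomputable def logistic (x : ℝ) : ℝ := Real.exp x / (1 + Real.exp x)

noncomputable def sgn (x : ℝ) : ℝ := if 0 ≤ x then 1 else -1

/-- Misclassification risk R(η) = P(Y ≠ η(ω)) in the 1-bit matrix completion model: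
ω uniform on [m₁] × [m₂] and, given ω, Y = 1 with probability f(X*_ω), Y = -1 otherwise. -/
noncomputable def Risk {m₁ m₂ : ℕ} (Xs : Matrix (Fin m₁) (Fin m₂) ℝ)
    (η : Fin m₁ → Fin m₂ → ℝ) : ℝ :=
  (1 / (m₁ * m₂ : ℝ)) * ∑ i, ∑ j,
    (logistic (Xs i j) * (if η i j = 1 then 0 else 1) +
      (1 - logistic (Xs i j)) * (if η i j = -1 then 0 else 1))

noncomputable def frobeniusNorm {m₁ m₂ : ℕ} (X : Matrix (Fin m₁) (Fin m₂) ℝ) : ℝ :=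
  Real.sqrt (∑ i, ∑ j, (X i j) ^ 2)

lemma logistic_zero : logistic 0 = 1 / 2 := by
  simp [logistic]
  norm_num

lemma hasDerivAt_logistic (y : ℝ) :
    HasDerivAt logistic (Real.exp y / (1 + Real.exp y) ^ 2) y := by
  have h1 : HasDerivAt Real.exp (Real.exp y) y := Real.hasDerivAt_exp y
  have h2 : HasDerivAt (fun y => 1 + Real.exp y) (Real.exp y) y := h1.const_add 1
  have h3 := h1.div h2 (by positivity)
  refine h3.congr_deriv ?_
  have := (Real.exp_pos y).le
  ring

lemma abs_logistic_sub_half (x : ℝ) : |logistic x - 1 / 2| ≤ |x| / 4 := by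
  have key : ‖logistic x - logistic 0‖ ≤ (1/4 : ℝ) * ‖x - 0‖ := by
    apply Convex.norm_image_sub_le_of_norm_hasDerivWithin_le
      (f' := fun y => Real.exp y / (1 + Real.exp y) ^ 2)
      (fun y _ => (hasDerivAt_logistic y).hasDerivWithinAt)
      _ convex_univ (Set.mem_univ 0) (Set.mem_univ x)
    intro y _
    have he : 0 < Real.exp y := Real.exp_pos y
    rw [Real.norm_eq_abs, abs_of_nonneg (by positivity)]
    rw [div_le_iff₀ (by positivity)]
    nlinarith [sq_nonneg (1 - Real.exp y)]
  rw [logistic_zero] at key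
  simp only [Real.norm_eq_abs, sub_zero] at key
  linarith

lemma half_le_logistic {x : ℝ} (hx : 0 ≤ x) : 1 / 2 ≤ logistic x := by
  have he : (1:ℝ) ≤ Real.exp x := Real.one_le_exp hx
  rw [logistic, le_div_iff₀ (by positivity)]
  linarith

lemma logistic_le_half {x : ℝ} (hx : x ≤ 0) : logistic x ≤ 1 / 2 := by
  have he : Real.exp x ≤ 1 := Real.exp_le_one_iff.mpr hx
  have he' : 0 < Real.exp x := Real.exp_pos x
  rw [logistic, div_le_iff₀ (by positivity)]
  linarith

/-- Per-entry excess risk. -/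
noncomputable def entryD (s h : ℝ) : ℝ :=
  (logistic s * (if sgn h = 1 then 0 else 1) +
      (1 - logistic s) * (if sgn h = -1 then 0 else 1)) -
    (logistic s * (if sgn s = 1 then 0 else 1) +
      (1 - logistic s) * (if sgn s = -1 then 0 else 1))

lemma entryD_le_half (s h : ℝ) : entryD s h ≤ |h - s| / 2 := by
  have hls := abs_logistic_sub_half s
  by_cases hh : 0 ≤ h <;> by_cases hs : 0 ≤ s
  · simp only [entryD, sgn, hh, hs, if_true]
    norm_num
    positivity
  · push_neg at hs
    have h1 : logistic s ≤ 1 / 2 := logistic_le_half hs.le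
    rw [abs_of_nonpos (by linarith), abs_of_nonpos hs.le] at hls
    rw [abs_of_nonneg (by linarith : (0:ℝ) ≤ h - s)]
    simp only [entryD, sgn, if_pos hh, if_neg (not_le.mpr hs)]
    norm_num
    linarith
  · push_neg at hh
    have h1 : 1 / 2 ≤ logistic s := half_le_logistic hs
    rw [abs_of_nonneg (by linarith), abs_of_nonneg hs] at hls
    rw [abs_of_nonpos (by linarith : h - s ≤ 0)]
    simp only [entryD, sgn, if_neg (not_le.mpr hh), if_pos hs]
    norm_num
    linarith
  · simp only [entryD, sgn, hh, hs, if_false]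
    norm_num
    positivity

lemma entryD_le_sq {s h c : ℝ} (hc : 0 < c) (hln : 1 / (2 * c) ≤ |logistic s - 1 / 2|) :
    entryD s h ≤ c * (h - s) ^ 2 / 4 := by
  have hls := abs_logistic_sub_half s
  have hln' : 1 ≤ 2 * c * |logistic s - 1 / 2| := by
    rw [div_le_iff₀ (by positivity)] at hln
    linarith
  by_cases hh : 0 ≤ h <;> by_cases hs : 0 ≤ s
  · simp only [entryD, sgn, hh, hs, if_true]
    norm_num
    positivity
  · push_neg at hs
    have h1 : logistic s ≤ 1 / 2 := logistic_le_half hs.le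
    rw [abs_of_nonpos (by linarith)] at hls hln'
    rw [abs_of_nonpos hs.le] at hls
    simp only [entryD, sgn, if_pos hh, if_neg (not_le.mpr hs)]
    norm_num
    nlinarith [mul_nonneg (by linarith : (0:ℝ) ≤ 1 / 2 - logistic s)
        (by linarith : (0:ℝ) ≤ 2 * c * (1 / 2 - logistic s) - 1),
      mul_nonneg hc.le (mul_nonneg (by linarith : (0:ℝ) ≤ -s / 4 - (1 / 2 - logistic s))
        (by linarith : (0:ℝ) ≤ -s / 4 + (1 / 2 - logistic s))),
      mul_nonneg hc.le (mul_nonneg hh (neg_nonneg.mpr hs.le)),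
      mul_nonneg hc.le (sq_nonneg h)]
  · push_neg at hh
    have h1 : 1 / 2 ≤ logistic s := half_le_logistic hs
    rw [abs_of_nonneg (by linarith)] at hls hln'
    rw [abs_of_nonneg hs] at hls
    simp only [entryD, sgn, if_neg (not_le.mpr hh), if_pos hs]
    norm_num
    nlinarith [mul_nonneg (by linarith : (0:ℝ) ≤ logistic s - 1 / 2)
        (by linarith : (0:ℝ) ≤ 2 * c * (logistic s - 1 / 2) - 1),
      mul_nonneg hc.le (mul_nonneg (by linarith : (0:ℝ) ≤ s / 4 - (logistic s - 1 / 2))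
        (by linarith : (0:ℝ) ≤ s / 4 + (logistic s - 1 / 2))),
      mul_nonneg hc.le (mul_nonneg (neg_nonneg.mpr hh.le) hs),
      mul_nonneg hc.le (sq_nonneg h)]
  · simp only [entryD, sgn, hh, hs, if_false]
    norm_num
    positivity

theorem excess_risk_from_estimation_error {m₁ m₂ : ℕ} (Xs Xh : Matrix (Fin m₁) (Fin m₂) ℝ)
    (ε : ℝ) (hest : (1 / (m₁ * m₂ : ℝ)) * frobeniusNorm (Xh - Xs) ^ 2 ≤ ε) :
    Risk Xs (fun i j => sgn (Xh i j)) - Risk Xs (fun i j => sgn (Xs i j)) ≤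
        (1 / 2) * Real.sqrt ε ∧
      ∀ c : ℝ, 0 < c → (∀ i j, 1 / (2 * c) ≤ |logistic (Xs i j) - 1 / 2|) →
        Risk Xs (fun i j => sgn (Xh i j)) - Risk Xs (fun i j => sgn (Xs i j)) ≤
          c / 4 * ε := by
  set N : ℝ := (m₁ * m₂ : ℝ) with hN
  have hε : 0 ≤ ε := le_trans (mul_nonneg (by positivity) (sq_nonneg _)) hest
  have hdiff : Risk Xs (fun i j => sgn (Xh i j)) - Risk Xs (fun i j => sgn (Xs i j)) =
      (1 / N) * ∑ i, ∑ j, entryD (Xs i j) (Xh i j) := by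
    rw [Risk, Risk, ← mul_sub, ← Finset.sum_sub_distrib]
    congr 1
    refine Finset.sum_congr rfl fun i _ => ?_
    rw [← Finset.sum_sub_distrib]
    rfl
  have hfrob : frobeniusNorm (Xh - Xs) ^ 2 = ∑ i, ∑ j, (Xh i j - Xs i j) ^ 2 := by
    rw [frobeniusNorm, Real.sq_sqrt (by positivity)]
    simp [Matrix.sub_apply]
  rw [hfrob] at hest
  rcases eq_or_lt_of_le (by positivity : (0:ℝ) ≤ N) with hN0 | hN0
  · have h0 : (1 / N) * ∑ i, ∑ j, entryD (Xs i j) (Xh i j) = 0 := by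
      rw [← hN0]; simp
    refine ⟨?_, fun c hc _ => ?_⟩ <;> rw [hdiff, h0] <;> positivity
  constructor
  · -- first bound
    rw [hdiff]
    have step1 : (∑ i, ∑ j, entryD (Xs i j) (Xh i j)) ≤
        ∑ i, ∑ j, |Xh i j - Xs i j| / 2 :=
      Finset.sum_le_sum fun i _ => Finset.sum_le_sum fun j _ => entryD_le_half _ _
    have hT : (0:ℝ) ≤ ∑ i, ∑ j, |Xh i j - Xs i j| :=
      Finset.sum_nonneg fun i _ => Finset.sum_nonneg fun j _ => abs_nonneg _
    have hcs : (∑ i, ∑ j, |Xh i j - Xs i j|) ^ 2 ≤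
        N * ∑ i, ∑ j, (Xh i j - Xs i j) ^ 2 := by
      have := sq_sum_le_card_mul_sum_sq
        (s := (Finset.univ : Finset (Fin m₁ × Fin m₂)))
        (f := fun p => |Xh p.1 p.2 - Xs p.1 p.2|)
      simp only [Finset.card_univ, Fintype.card_prod, Fintype.card_fin,
        Fintype.sum_prod_type, sq_abs] at this
      calc (∑ i, ∑ j, |Xh i j - Xs i j|) ^ 2
          ≤ ((m₁ * m₂ : ℕ) : ℝ) * ∑ i, ∑ j, (Xh i j - Xs i j) ^ 2 := this
        _ = N * ∑ i, ∑ j, (Xh i j - Xs i j) ^ 2 := by push_cast [hN]; ring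
    have hmean : (1 / N) * (∑ i, ∑ j, |Xh i j - Xs i j|) ≤ Real.sqrt ε := by
      rw [show Real.sqrt ε = Real.sqrt ε from rfl]
      have h2 : ((1 / N) * (∑ i, ∑ j, |Xh i j - Xs i j|)) ^ 2 ≤ ε := by
        have : ((1 / N) * (∑ i, ∑ j, |Xh i j - Xs i j|)) ^ 2 =
            (∑ i, ∑ j, |Xh i j - Xs i j|) ^ 2 / N ^ 2 := by ring
        rw [this]
        rw [div_le_iff₀ (by positivity)]
        calc (∑ i, ∑ j, |Xh i j - Xs i j|) ^ 2
            ≤ N * ∑ i, ∑ j, (Xh i j - Xs i j) ^ 2 := hcs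
          _ ≤ N * (N * ε) := by
              apply mul_le_mul_of_nonneg_left _ hN0.le
              rw [one_div, inv_mul_le_iff₀ hN0] at hest
              linarith [hest]
          _ = ε * N ^ 2 := by ring
      have hx : 0 ≤ (1 / N) * (∑ i, ∑ j, |Xh i j - Xs i j|) := by positivity
      exact (Real.le_sqrt hx hε).mpr h2
    calc (1 / N) * ∑ i, ∑ j, entryD (Xs i j) (Xh i j)
        ≤ (1 / N) * ∑ i, ∑ j, |Xh i j - Xs i j| / 2 := by
          apply mul_le_mul_of_nonneg_left step1 (by positivity)
      _ = (1 / 2) * ((1 / N) * ∑ i, ∑ j, |Xh i j - Xs i j|) := by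
          simp only [Finset.mul_sum]
          exact Finset.sum_congr rfl fun i _ => Finset.sum_congr rfl fun j _ => by ring
      _ ≤ (1 / 2) * Real.sqrt ε := by linarith [hmean]
  · -- second bound
    intro c hc hln
    rw [hdiff]
    have step1 : (∑ i, ∑ j, entryD (Xs i j) (Xh i j)) ≤
        ∑ i, ∑ j, c * (Xh i j - Xs i j) ^ 2 / 4 :=
      Finset.sum_le_sum fun i _ => Finset.sum_le_sum fun j _ =>
        entryD_le_sq hc (hln i j)
    calc (1 / N) * ∑ i, ∑ j, entryD (Xs i j) (Xh i j)
        ≤ (1 / N) * ∑ i, ∑ j, c * (Xh i j - Xs i j) ^ 2 / 4 := by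
          apply mul_le_mul_of_nonneg_left step1 (by positivity)
      _ = (c / 4) * ((1 / N) * ∑ i, ∑ j, (Xh i j - Xs i j) ^ 2) := by
          simp only [Finset.mul_sum]
          exact Finset.sum_congr rfl fun i _ => Finset.sum_congr rfl fun j _ => by ring
      _ ≤ c / 4 * ε := by
          apply mul_le_mul_of_nonneg_left hest (by positivity)
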